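/- For every z ∈ ℝ and every w = (w₁,…,w_p) ∈ ℝ^p, one has |m̃_{p+1}(z, w₁, …, w_p) − m̃_p(w₁, …, w_p)| ≤ 2|z|, where m̃_{p+1} is evaluated at the (p+1)-tuple obtained by adjoining z to w. -/

import Mathlib

open Classical in
/-- The regularized max-min function `m̃_q`: with `M(z) = max_j z_j` and `m(z) = min_j z_j`,
`m̃_q(z) = ½(M+m) + ½(M−m)·χ((M+m)/(M−m))` when `M > m`, and `m̃_q(z) = z₁` when all
coordinates are equal. -/
noncomputable def mtilde {q : ℕ} (χ : ℝ → ℝ) (z : Fin q → ℝ) : ℝ :=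
  if (⨆ j, z j) = (⨅ j, z j) then (⨆ j, z j)
  else ((⨆ j, z j) + (⨅ j, z j)) / 2 +
    ((⨆ j, z j) - (⨅ j, z j)) / 2 *
      χ (((⨆ j, z j) + (⨅ j, z j)) / ((⨆ j, z j) - (⨅ j, z j)))

open Classical in
/-- The two-variable version of the regularized max-min function, as a function of the
max `M` and the min `m`. -/
noncomputable def Fmm (χ : ℝ → ℝ) (M m : ℝ) : ℝ :=
  if M = m then M
  else (M + m) / 2 + (M - m) / 2 * χ ((M + m) / (M - m))

lemma mtilde_eq_Fmm {q : ℕ} (χ : ℝ → ℝ) (v : Fin q → ℝ) :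
    mtilde χ v = Fmm χ (⨆ j, v j) (⨅ j, v j) := rfl

lemma Fmm_eq_max (χ : ℝ → ℝ) (hχp : ∀ s : ℝ, 1 ≤ s → χ s = 1)
    {M m : ℝ} (hm0 : 0 ≤ m) (hmM : m ≤ M) : Fmm χ M m = M := by
  unfold Fmm
  split_ifs with h
  · rfl
  · have hMm : 0 < M - m := sub_pos.mpr (lt_of_le_of_ne hmM (fun e => h e.symm))
    have hs : (1:ℝ) ≤ (M + m) / (M - m) := (le_div_iff₀ hMm).mpr (by linarith)
    rw [hχp _ hs]; ring

lemma Fmm_eq_min (χ : ℝ → ℝ) (hχm : ∀ s : ℝ, s ≤ -1 → χ s = -1)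
    {M m : ℝ} (hM0 : M ≤ 0) (hmM : m ≤ M) : Fmm χ M m = m := by
  unfold Fmm
  split_ifs with h
  · exact h
  · have hMm : 0 < M - m := sub_pos.mpr (lt_of_le_of_ne hmM (fun e => h e.symm))
    have hs : (M + m) / (M - m) ≤ -1 := (div_le_iff₀ hMm).mpr (by linarith)
    rw [hχm _ hs]; ring

lemma Fmm_neg (χ : ℝ → ℝ) (hχodd : ∀ s : ℝ, χ (-s) = -χ s)
    (M m : ℝ) : Fmm χ (-m) (-M) = -Fmm χ M m := by
  unfold Fmm
  split_ifs with h h2 h2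
  · linarith [neg_injective h]
  · exact absurd (by linarith : M = m) h2
  · exact absurd (by rw [h2]) h
  · have : (-m + -M) / (-m - -M) = -((M + m) / (M - m)) := by
      rw [show (-m + -M) = -(M+m) by ring, show (-m - -M) = (M - m) by ring, neg_div]
    rw [this, hχodd]; ring

/-- The key estimate: raising the max variable from `M` to `zz` changes `Fmm` by at
most `2|zz|`. -/
lemma Fmm_key (χ : ℝ → ℝ)
    (hχdiff : Differentiable ℝ χ)
    (hχm : ∀ s : ℝ, s ≤ -1 → χ s = -1) (hχp : ∀ s : ℝ, 1 ≤ s → χ s = 1)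
    (hχ'nonneg : ∀ s : ℝ, 0 ≤ deriv χ s) (hχ'le : ∀ s : ℝ, deriv χ s ≤ 2)
    (hχle : ∀ s : ℝ, -1 ≤ s → s ≤ 0 → χ s ≤ s)
    {M m zz : ℝ} (hmM : m ≤ M) (hMz : M < zz) :
    |Fmm χ zz m - Fmm χ M m| ≤ 2 * |zz| := by
  have hmono : Monotone χ := monotone_of_deriv_nonneg hχdiff hχ'nonneg
  have hgem1 : ∀ s : ℝ, -1 ≤ χ s := by
    intro s
    rcases le_total s (-1) with h | h
    · rw [hχm s h]
    · calc (-1 : ℝ) = χ (-1) := (hχm (-1) le_rfl).symm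
        _ ≤ χ s := hmono h
  have hle1 : ∀ s : ℝ, χ s ≤ 1 := by
    intro s
    rcases le_total 1 s with h | h
    · rw [hχp s h]
    · calc χ s ≤ χ 1 := hmono h
        _ = 1 := hχp 1 le_rfl
  rcases le_or_gt 0 m with hm0 | hm0
  · -- all nonnegative: Fmm = max
    rw [Fmm_eq_max χ hχp hm0 hmM, Fmm_eq_max χ hχp hm0 (le_trans hmM hMz.le)]
    rw [abs_of_nonneg (by linarith : (0:ℝ) ≤ zz - M)]
    have := le_abs_self zz
    linarith
  · rcases le_or_gt zz 0 with hz0 | hz0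
    · -- all nonpositive: Fmm = min
      rw [Fmm_eq_min χ hχm hz0 (by linarith), Fmm_eq_min χ hχm (by linarith) hmM]
      simp [abs_nonneg]
    · -- m < 0 < zz : MVT on [max M 0, zz]
      set M₀ := max M 0 with hM₀def
      have hFM : Fmm χ M m = Fmm χ M₀ m := by
        rcases le_or_gt 0 M with hM | hM
        · have : M₀ = M := max_eq_left hM
          rw [this]
        · have : M₀ = 0 := max_eq_right hM.le
          rw [this, Fmm_eq_min χ hχm hM.le hmM, Fmm_eq_min χ hχm le_rfl hm0.le]
      have hM₀z : M₀ < zz := max_lt hMz hz0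
      have hM₀0 : 0 ≤ M₀ := le_max_right _ _
      have hmM₀ : m < M₀ := lt_of_lt_of_le hm0 hM₀0
      set g : ℝ → ℝ := fun t => (t + m) / 2 + (t - m) / 2 * χ ((t + m) / (t - m)) with hg
      set g' : ℝ → ℝ := fun t =>
        1/2 + χ ((t + m) / (t - m)) / 2 + deriv χ ((t + m) / (t - m)) * (-m) / (t - m) with hg'
      have hderiv : ∀ t : ℝ, m < t → HasDerivAt g (g' t) t := by
        intro t hmt
        have htm : (0:ℝ) < t - m := sub_pos.mpr hmt
        have h1 : HasDerivAt (fun t : ℝ => (t + m) / (t - m)) ((-2*m)/(t-m)^2) t := by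
          have := ((hasDerivAt_id t).add_const m).div ((hasDerivAt_id t).sub_const m) htm.ne'
          exact this.congr_deriv (by simp only [id]; ring)
        have h2 : HasDerivAt (fun t : ℝ => χ ((t + m) / (t - m)))
            (deriv χ ((t + m) / (t - m)) * ((-2*m)/(t-m)^2)) t :=
          ((hχdiff _).hasDerivAt).comp t h1
        have h3 : HasDerivAt g
            (1/2 + ((1/2) * χ ((t + m) / (t - m)) +
              (t - m) / 2 * (deriv χ ((t + m) / (t - m)) * ((-2*m)/(t-m)^2)))) t := by
          exact (((hasDerivAt_id t).add_const m).div_const 2).add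
            ((((hasDerivAt_id t).sub_const m).div_const 2).mul h2)
        convert h3 using 1
        rw [hg']
        field_simp
        ring
      have hcont : ContinuousOn g (Set.Icc M₀ zz) := fun t ht =>
        (hderiv t (lt_of_lt_of_le hmM₀ ht.1)).continuousAt.continuousWithinAt
      obtain ⟨c, hc, hceq⟩ := exists_hasDerivAt_eq_slope g g' hM₀z hcont
        (fun x hx => hderiv x (lt_trans hmM₀ hx.1))
      -- bound g' c between 0 and 2
      have hc0 : 0 < c := lt_of_le_of_lt hM₀0 hc.1
      have hcm : 0 < c - m := by linarith
      set s : ℝ := (c + m) / (c - m) with hs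
      have hs1 : -1 < s := by
        rw [hs, lt_div_iff₀ hcm]; linarith
      have hs2 : s < 1 := by
        rw [hs, div_lt_one hcm]; linarith
      have hu : -m / (c - m) = (1 - s) / 2 := by
        rw [hs]; field_simp; ring
      have hglow : 0 ≤ g' c := by
        rw [hg']
        have h1 : 0 ≤ deriv χ s * (-m) / (c - m) := by
          apply div_nonneg _ hcm.le
          exact mul_nonneg (hχ'nonneg s) (by linarith)
        have := hgem1 s
        simp only [← hs]
        linarith
      have hghigh : g' c ≤ 2 := by
        rw [hg']
        simp only [← hs]
        have heq : deriv χ s * (-m) / (c - m) = deriv χ s * ((1 - s)/2) := by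
          rw [mul_div_assoc, hu]
        rw [heq]
        have hprod : deriv χ s * ((1 - s)/2) ≤ 2 * ((1 - s)/2) :=
          mul_le_mul_of_nonneg_right (hχ'le s) (by linarith)
        rcases le_or_gt s 0 with hsle | hsgt
        · have := hχle s hs1.le hsle
          linarith
        · have := hle1 s
          linarith
      -- conclude
      have hzznz : Fmm χ zz m = g zz := by
        unfold Fmm; rw [if_neg (by intro h; rw [h] at hz0; exact absurd hz0 (not_lt.mpr hm0.le))]
      have hM₀nz : Fmm χ M₀ m = g M₀ := by
        unfold Fmm; rw [if_neg (ne_of_gt hmM₀)]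
      have hslope : g zz - g M₀ = g' c * (zz - M₀) := by
        rw [hceq, div_mul_cancel₀ _ (ne_of_gt (sub_pos.mpr hM₀z))]
      rw [hFM, hzznz, hM₀nz, hslope]
      rw [abs_of_nonneg (mul_nonneg hglow (by linarith))]
      have h2z : g' c * (zz - M₀) ≤ 2 * zz := by
        calc g' c * (zz - M₀) ≤ 2 * (zz - M₀) :=
              mul_le_mul_of_nonneg_right hghigh (by linarith)
          _ ≤ 2 * zz := by linarith
      calc g' c * (zz - M₀) ≤ 2 * zz := h2z
        _ ≤ 2 * |zz| := by have := le_abs_self zz; linarith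

lemma ciSup_fin_cons {p : ℕ} (hp : 0 < p) (z : ℝ) (w : Fin p → ℝ) :
    (⨆ j, Fin.cons z w j) = max z (⨆ j, w j) := by
  haveI : Nonempty (Fin p) := ⟨⟨0, hp⟩⟩
  apply le_antisymm
  · refine ciSup_le fun j => ?_
    refine Fin.cases ?_ ?_ j
    · simpa using le_max_left z (⨆ j, w j)
    · intro i
      simp only [Fin.cons_succ]
      exact le_trans (le_ciSup (Set.finite_range w).bddAbove i) (le_max_right _ _)
  · refine max_le ?_ ?_
    · simpa using le_ciSup (Set.finite_range (Fin.cons z w)).bddAbove (0 : Fin (p+1))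
    · refine ciSup_le fun i => ?_
      simpa using le_ciSup (Set.finite_range (Fin.cons z w)).bddAbove i.succ

lemma ciInf_fin_cons {p : ℕ} (hp : 0 < p) (z : ℝ) (w : Fin p → ℝ) :
    (⨅ j, Fin.cons z w j) = min z (⨅ j, w j) := by
  haveI : Nonempty (Fin p) := ⟨⟨0, hp⟩⟩
  apply le_antisymm
  · refine le_min ?_ ?_
    · simpa using ciInf_le (Set.finite_range (Fin.cons z w)).bddBelow (0 : Fin (p+1))
    · refine le_ciInf fun i => ?_
      simpa using ciInf_le (Set.finite_range (Fin.cons z w)).bddBelow i.succ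
  · refine le_ciInf fun j => ?_
    refine Fin.cases ?_ ?_ j
    · simpa using min_le_left z (⨅ j, w j)
    · intro i
      simp only [Fin.cons_succ]
      exact le_trans (min_le_right _ _) (ciInf_le (Set.finite_range w).bddBelow i)

lemma ciInf_le_ciSup_fin {p : ℕ} (hp : 0 < p) (w : Fin p → ℝ) :
    (⨅ j, w j) ≤ ⨆ j, w j := by
  haveI : Nonempty (Fin p) := ⟨⟨0, hp⟩⟩
  exact le_trans (ciInf_le (Set.finite_range w).bddBelow ⟨0, hp⟩)
    (le_ciSup (Set.finite_range w).bddAbove ⟨0, hp⟩)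

/-- Adjoining one coordinate `z` changes `m̃` by at most `2|z|`:
`|m̃_{p+1}(z, w₁, …, w_p) − m̃_p(w₁, …, w_p)| ≤ 2|z|`. -/
theorem stmt_9 (p : ℕ) (hp : 1 ≤ p) (χ : ℝ → ℝ)
    (hχodd : ∀ s : ℝ, χ (-s) = -χ s) (hχdiff : Differentiable ℝ χ)
    (hχm : ∀ s : ℝ, s ≤ -1 → χ s = -1) (hχp : ∀ s : ℝ, 1 ≤ s → χ s = 1)
    (hχ'nonneg : ∀ s : ℝ, 0 ≤ deriv χ s) (hχ'le : ∀ s : ℝ, deriv χ s ≤ 2)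
    (hχle : ∀ s : ℝ, -1 ≤ s → s ≤ 0 → χ s ≤ s)
    (hχge : ∀ s : ℝ, 0 ≤ s → s ≤ 1 → s ≤ χ s)
    (z : ℝ) (w : Fin p → ℝ) :
    |mtilde χ (Fin.cons z w) - mtilde χ w| ≤ 2 * |z| := by
  have hp0 : 0 < p := hp
  set M := ⨆ j, w j with hM
  set m := ⨅ j, w j with hm
  have hmM : m ≤ M := ciInf_le_ciSup_fin hp0 w
  have h1 : mtilde χ w = Fmm χ M m := mtilde_eq_Fmm χ w
  have h2 : mtilde χ (Fin.cons z w) = Fmm χ (max z M) (min z m) := by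
    rw [mtilde_eq_Fmm, ciSup_fin_cons hp0 z w, ciInf_fin_cons hp0 z w]
  rw [h1, h2]
  rcases lt_or_ge M z with hzM | hzM
  · -- z > M: max = z, min = m
    rw [max_eq_left hzM.le, min_eq_right (le_of_lt (lt_of_le_of_lt hmM hzM))]
    exact Fmm_key χ hχdiff hχm hχp hχ'nonneg hχ'le hχle hmM hzM
  · rcases lt_or_ge z m with hzm | hzm
    · -- z < m: max = M, min = z
      rw [max_eq_right (hzm.le.trans hmM), min_eq_left hzm.le]
      have e1 : Fmm χ M z = -Fmm χ (-z) (-M) := by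
        rw [Fmm_neg χ hχodd M z]; ring
      have e2 : Fmm χ M m = -Fmm χ (-m) (-M) := by
        rw [Fmm_neg χ hχodd M m]; ring
      rw [e1, e2, show -Fmm χ (-z) (-M) - -Fmm χ (-m) (-M)
          = -(Fmm χ (-z) (-M) - Fmm χ (-m) (-M)) by ring, abs_neg]
      have := Fmm_key χ hχdiff hχm hχp hχ'nonneg hχ'le hχle
        (neg_le_neg hmM) (neg_lt_neg hzm) 
      rwa [abs_neg] at this
    · -- m ≤ z ≤ M: nothing changes
      rw [max_eq_right hzM, min_eq_right hzm, sub_self, abs_zero]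
      positivity
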